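/- arXiv:1008.0095 — 5 statements merged into one kernel-verified Lean document; each statement's English description precedes it below -/
import Mathlib

section
/- Let k be a field and let I, J, L be well-ordered sets together with a map μ : I × J → L that is strictly monotone in each variable (α < α′ implies μ(α,β) < μ(α′,β) for all β, and β < β′ implies μ(α,β) < μ(α,β′) for all α). Let U be a k-vector space with an increasing exhaustive I-filtration F and V a k-vector space with an increasing exhaustive J-filtration F. For γ ∈ L define F_γ(U ⊗_k V) = Σ_{(α,β) : μ(α,β) ≤ γ} Im(F_α U ⊗_k F_β V → U ⊗_k V). Then these subspaces form an increasing exhaustive L-filtration on U ⊗_k V, and for every γ ∈ L there is a k-linear isomorphism gr_γ(U ⊗_k V) ≅ ⊕_{(α,β) : μ(α,β) = γ} (gr_α U) ⊗_k (gr_β V). -/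
open Submodule
open scoped TensorProduct DirectSum

section GradedPieces

variable {k : Type*} [Field k]

/-- The sum `Σ_{β < α} F β` of the filtration pieces strictly below `α`. -/
abbrev filtBelow {I V : Type*} [LinearOrder I] [AddCommGroup V] [Module k V]
    (F : I → Submodule k V) (α : I) : Submodule k V :=
  ⨆ β ∈ Set.Iio α, F β

/-- The associated graded piece `gr_α V = F_α V / Σ_{β < α} F_β V` of an `I`-filtered
vector space. -/
abbrev filtGr {I V : Type*} [LinearOrder I] [AddCommGroup V] [Module k V]
    (F : I → Submodule k V) (α : I) : Type _ :=
  ↥(F α) ⧸ (filtBelow F α).comap (F α).subtype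

/-- The `L`-indexed filtration on `U ⊗ V` induced by an `I`-filtration on `U`, a
`J`-filtration on `V` and a map `μ : I × J → L`:
`F_γ (U ⊗ V) = Σ_{μ(α,β) ≤ γ} Im (F_α U ⊗ F_β V → U ⊗ V)`. -/
noncomputable abbrev tensorFilt {I J L U V : Type*} [LinearOrder I] [LinearOrder J] [LinearOrder L]
    [AddCommGroup U] [Module k U] [AddCommGroup V] [Module k V]
    (μ : I × J → L) (FU : I → Submodule k U) (FV : J → Submodule k V) (γ : L) :
    Submodule k (U ⊗[k] V) :=
  ⨆ p ∈ {p : I × J | μ p ≤ γ},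
    LinearMap.range (TensorProduct.map (FU p.1).subtype (FV p.2).subtype)

end GradedPieces


section Aux

variable {k : Type*} [Field k]

/-- Independence from disjointness with the sup of pieces below, in a linear order. -/
lemma aux_indep_of_disjoint_Iio {ι M : Type*} [LinearOrder ι] [AddCommGroup M] [Module k M]
    (W : ι → Submodule k M) (h : ∀ i, Disjoint (⨆ j ∈ Set.Iio i, W j) (W i)) :
    iSupIndep W := by
  classical
  apply iSupIndep_of_dfinsupp_lsum_injective
  rw [← LinearMap.ker_eq_bot, LinearMap.ker_eq_bot']
  intro v hv
  by_contra hne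
  have hsupp : v.support.Nonempty := by
    rw [Finset.nonempty_iff_ne_empty, Ne, DFinsupp.support_eq_empty]; exact hne
  set m := v.support.max' hsupp with hm
  have hsplit : (DFinsupp.single m (v m)) + v.erase m = v := DFinsupp.single_add_erase m v
  have hve : (v m : M) + (DFinsupp.lsum ℕ (M := fun i ↦ ↥(W i)) fun i => (W i).subtype)
      (v.erase m) = 0 := by
    have h2 := congrArg (DFinsupp.lsum ℕ (M := fun i ↦ ↥(W i)) fun i => (W i).subtype) hsplit
    rw [map_add, DFinsupp.lsum_single] at h2
    simpa using h2.trans hv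
  have hmem : (DFinsupp.lsum ℕ (M := fun i ↦ ↥(W i)) fun i => (W i).subtype) (v.erase m)
      ∈ ⨆ j ∈ Set.Iio m, W j := by
    rw [DFinsupp.lsum_apply_apply, DFinsupp.sumAddHom_apply]
    apply Submodule.sum_mem
    intro j hj
    rw [DFinsupp.support_erase] at hj
    have hj1 : j ≠ m := Finset.ne_of_mem_erase hj
    have hj2 : j ∈ v.support := Finset.mem_of_mem_erase hj
    have hjm : j < m := lt_of_le_of_ne (Finset.le_max' _ _ hj2) hj1
    exact Submodule.mem_iSup_of_mem j (Submodule.mem_iSup_of_mem hjm ((v.erase m) j).2)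
  have hvm : (v m : M) ∈ ⨆ j ∈ Set.Iio m, W j := by
    rw [eq_neg_of_add_eq_zero_left hve]
    exact Submodule.neg_mem _ hmem
  have : (v m : M) = 0 := (h m).le_bot ⟨hvm, (v m).2⟩
  have : v m = 0 := Subtype.ext this
  exact (DFinsupp.mem_support_iff.mp (v.support.max'_mem hsupp)) this


lemma aux_disjoint_biSup_biSup {ι M : Type*} [AddCommGroup M] [Module k M]
    {G : ι → Submodule k M} (h : iSupIndep G) {s t : Set ι} (hst : Disjoint s t) :
    Disjoint (⨆ i ∈ s, G i) (⨆ i ∈ t, G i) := by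
  classical
  rw [disjoint_def]
  intro x hxs hxt
  obtain ⟨f, hf⟩ := (Submodule.mem_biSup_iff_exists_dfinsupp (· ∈ s) G x).mp hxs
  obtain ⟨g, hg⟩ := (Submodule.mem_biSup_iff_exists_dfinsupp (· ∈ t) G x).mp hxt
  have hfg : f.filter (· ∈ s) = g.filter (· ∈ t) :=
    h.dfinsupp_lsum_injective (hf.trans hg.symm)
  have hz : f.filter (· ∈ s) = 0 := by
    ext i
    by_cases hi : i ∈ s
    · rw [hfg, DFinsupp.filter_apply_neg g (Set.disjoint_left.mp hst hi)]; rfl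
    · rw [DFinsupp.filter_apply_neg f hi]; rfl
  rw [← hf, hz, map_zero]

/-- The component ranges of a direct sum are independent. -/
lemma aux_lof_indep {ι : Type*} [DecidableEq ι] (M : ι → Type*)
    [∀ i, AddCommGroup (M i)] [∀ i, Module k (M i)] :
    iSupIndep fun i => LinearMap.range (DirectSum.lof k ι M i) := by
  rw [iSupIndep_def]
  intro i
  rw [disjoint_def]
  intro x hx1 hx2
  obtain ⟨m, rfl⟩ := hx1
  have hker : (⨆ j, ⨆ (_ : j ≠ i), LinearMap.range (DirectSum.lof k ι M j)) ≤
      LinearMap.ker (DirectSum.component k ι M i) := by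
    refine iSup_le fun j => iSup_le fun hj => ?_
    rintro z ⟨y, rfl⟩
    rw [LinearMap.mem_ker, DirectSum.component.of, dif_neg hj]
  have := hker hx2
  rw [LinearMap.mem_ker, DirectSum.component.lof_self] at this
  rw [this, map_zero]

lemma aux_lof_top {ι : Type*} [DecidableEq ι] (M : ι → Type*)
    [∀ i, AddCommGroup (M i)] [∀ i, Module k (M i)] :
    (⨆ i, LinearMap.range (DirectSum.lof k ι M i)) = ⊤ := by
  rw [eq_top_iff]
  rintro x -
  induction x using DirectSum.induction_on with
  | zero => exact Submodule.zero_mem _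
  | of i b =>
      exact Submodule.mem_iSup_of_mem i ⟨b, (DirectSum.lof_eq_of k ι M i b).symm ▸ rfl⟩
  | add a b ha hb => exact Submodule.add_mem _ ha hb

lemma aux_range_map_subtype {U V : Type*} [AddCommGroup U] [Module k U]
    [AddCommGroup V] [Module k V] (p : Submodule k U) (q : Submodule k V) :
    LinearMap.range (TensorProduct.map p.subtype q.subtype) =
      Submodule.map₂ (TensorProduct.mk k U V) p q := by
  rw [TensorProduct.range_map_eq_span_tmul, Submodule.map₂_eq_span_image2]
  congr 1
  ext t
  constructor
  · rintro ⟨m, n, rfl⟩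
    exact ⟨m, m.2, n, n.2, rfl⟩
  · rintro ⟨m, hm, n, hn, rfl⟩
    exact ⟨⟨m, hm⟩, ⟨n, hn⟩, rfl⟩

lemma exists_compl_family {ι M : Type*} [LinearOrder ι] [WellFoundedLT ι]
    [AddCommGroup M] [Module k M] (F : ι → Submodule k M) (hmono : Monotone F) :
    ∃ W : ι → Submodule k M,
      (∀ i, Disjoint (filtBelow F i) (W i)) ∧
      (∀ i, W i ≤ F i) ∧
      (∀ i, F i = ⨆ j ∈ Set.Iic i, W j) ∧
      (∀ i, Nonempty (↥(W i) ≃ₗ[k] filtGr F i)) := by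
  have hex : ∀ i : ι, ∃ C : Submodule k ↥(F i),
      IsCompl ((filtBelow F i).comap (F i).subtype) C :=
    fun i => Submodule.exists_isCompl _
  choose C hC using hex
  have hBle : ∀ i, filtBelow F i ≤ F i := fun i =>
    iSup_le fun j => iSup_le fun hj => hmono (le_of_lt hj)
  have hd : ∀ i, Disjoint (filtBelow F i) ((C i).map (F i).subtype) := by
    intro i
    rw [disjoint_def]
    intro x hxB hxW
    obtain ⟨c, hc, rfl⟩ := hxW
    have hcK : c ∈ (filtBelow F i).comap (F i).subtype := hxB
    have hc0 : c ∈ (⊥ : Submodule k ↥(F i)) := (hC i).disjoint.le_bot ⟨hcK, hc⟩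
    rw [Submodule.mem_bot] at hc0
    rw [hc0]
    simp
  have hsup_i : ∀ i, filtBelow F i ⊔ (C i).map (F i).subtype = F i := by
    intro i
    have h1 : Submodule.map (F i).subtype ((filtBelow F i).comap (F i).subtype ⊔ C i) =
        Submodule.map (F i).subtype ⊤ := by rw [(hC i).sup_eq_top]
    rw [Submodule.map_sup, Submodule.map_comap_subtype, Submodule.map_top,
      Submodule.range_subtype, inf_of_le_right (hBle i)] at h1
    exact h1
  refine ⟨fun i => (C i).map (F i).subtype, hd, fun i => Submodule.map_subtype_le _ _, ?_, ?_⟩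
  · intro i
    induction i using WellFoundedLT.induction with
    | ind i IH =>
      have hb : filtBelow F i = ⨆ j ∈ Set.Iio i, (C j).map (F j).subtype := by
        apply le_antisymm
        · refine iSup_le fun j => iSup_le fun hj => ?_
          rw [IH j hj]
          refine iSup_le fun l => iSup_le fun hl => ?_
          exact le_iSup_of_le l (le_iSup_of_le (lt_of_le_of_lt hl hj) le_rfl)
        · refine iSup_le fun j => iSup_le fun hj => ?_
          exact (Submodule.map_subtype_le _ _).trans
            (le_iSup_of_le j (le_iSup_of_le hj le_rfl))
      rw [← hsup_i i, hb]
      have : Set.Iic i = insert i (Set.Iio i) := by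
        ext x; simp [le_iff_lt_or_eq, or_comm, Set.mem_insert_iff, eq_comm]
      rw [this, iSup_insert, sup_comm]
  · intro i
    exact ⟨((Submodule.quotientEquivOfIsCompl _ _ (hC i)).trans
      (Submodule.equivSubtypeMap (F i) (C i))).symm⟩

end Aux


section PsiAux

variable {k : Type*} [Field k] {I J : Type*} [DecidableEq I] [DecidableEq J]
  (M₁ : I → Type*) (M₂ : J → Type*)
  [∀ i, AddCommGroup (M₁ i)] [∀ i, Module k (M₁ i)]
  [∀ j, AddCommGroup (M₂ j)] [∀ j, Module k (M₂ j)]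
  {U V : Type*} [AddCommGroup U] [Module k U] [AddCommGroup V] [Module k V]

/-- The equivalence `⨁ (i,j), M₁ i ⊗ M₂ j ≃ U ⊗ V` induced by `⨁ M₁ ≃ U` and `⨁ M₂ ≃ V`. -/
noncomputable def auxPsi (eU : (⨁ i, M₁ i) ≃ₗ[k] U) (eV : (⨁ j, M₂ j) ≃ₗ[k] V) :
    (⨁ p : I × J, M₁ p.1 ⊗[k] M₂ p.2) ≃ₗ[k] U ⊗[k] V :=
  (TensorProduct.directSum k k M₁ M₂).symm.trans (TensorProduct.congr eU eV)

lemma auxPsi_lof_tmul (eU : (⨁ i, M₁ i) ≃ₗ[k] U) (eV : (⨁ j, M₂ j) ≃ₗ[k] V)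
    (a : I) (b : J) (u : M₁ a) (v : M₂ b) :
    auxPsi M₁ M₂ eU eV (DirectSum.lof k (I × J) (fun p => M₁ p.1 ⊗[k] M₂ p.2) (a, b) (u ⊗ₜ v)) =
      eU (DirectSum.lof k I M₁ a u) ⊗ₜ eV (DirectSum.lof k J M₂ b v) := by
  rw [auxPsi, LinearEquiv.trans_apply, TensorProduct.directSum_symm_lof_tmul,
    TensorProduct.congr_tmul]

end PsiAux

set_option maxHeartbeats 2000000 in
/-- Let `U` be `I`-filtered and `V` be `J`-filtered vector spaces over `k`
(increasing exhaustive filtrations, `I`, `J`, `L` well-ordered) and let `μ : I × J → L`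
be strictly monotone in each variable.  Then the subspaces
`F_γ(U ⊗ V) = Σ_{μ(α,β) ≤ γ} Im(F_α U ⊗ F_β V → U ⊗ V)` form an increasing exhaustive
`L`-filtration of `U ⊗ V`, and for every `γ` there is a `k`-linear isomorphism
`gr_γ (U ⊗ V) ≅ ⊕_{μ(α,β) = γ} gr_α U ⊗ gr_β V`. -/
theorem tensor_filtration_gr_iso
    {k I J L U V : Type*} [Field k]
    [LinearOrder I] [WellFoundedLT I] [LinearOrder J] [WellFoundedLT J]
    [LinearOrder L] [WellFoundedLT L]
    [AddCommGroup U] [Module k U] [AddCommGroup V] [Module k V]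
    (μ : I × J → L)
    (hμI : ∀ β : J, StrictMono fun α : I => μ (α, β))
    (hμJ : ∀ α : I, StrictMono fun β : J => μ (α, β))
    (FU : I → Submodule k U) (FV : J → Submodule k V)
    (hUmono : Monotone FU) (hVmono : Monotone FV)
    (hUexh : ⨆ α, FU α = ⊤) (hVexh : ⨆ β, FV β = ⊤) :
    Monotone (tensorFilt μ FU FV) ∧
    (⨆ γ, tensorFilt μ FU FV γ = ⊤) ∧
    ∀ γ : L, Nonempty
      (filtGr (tensorFilt μ FU FV) γ ≃ₗ[k]
        ⨁ p : {p : I × J // μ p = γ}, (filtGr FU p.1.1 ⊗[k] filtGr FV p.1.2)) := by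
  classical
  have hμmono : Monotone μ := fun q p h =>
    le_trans ((hμI q.2).monotone h.1 : μ (q.1, q.2) ≤ μ (p.1, q.2))
      ((hμJ p.1).monotone h.2 : μ (p.1, q.2) ≤ μ (p.1, p.2))
  have htt : Submodule.map₂ (TensorProduct.mk k U V) (⊤ : Submodule k U) (⊤ : Submodule k V)
      = ⊤ := by
    rw [Submodule.map₂_eq_span_image2, ← TensorProduct.span_tmul_eq_top k U V]
    congr 1
    ext t
    constructor
    · rintro ⟨m, -, n, -, rfl⟩; exact ⟨m, n, rfl⟩
    · rintro ⟨m, n, rfl⟩; exact ⟨m, trivial, n, trivial, rfl⟩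
  refine ⟨fun γ γ' h => biSup_mono fun p hp => le_trans hp h, ?_, ?_⟩
  · rw [eq_top_iff]
    have h1 : (⊤ : Submodule k (U ⊗[k] V)) =
        ⨆ α, ⨆ β, Submodule.map₂ (TensorProduct.mk k U V) (FU α) (FV β) := by
      rw [← htt, ← hUexh, ← hVexh, Submodule.map₂_iSup_left]
      refine iSup_congr fun α => Submodule.map₂_iSup_right _ _ _
    rw [h1]
    refine iSup_le fun α => iSup_le fun β => le_iSup_of_le (μ (α, β)) ?_
    rw [← aux_range_map_subtype]
    exact le_iSup_of_le (α, β) (le_iSup_of_le (le_refl (μ (α, β))) le_rfl)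
  · -- graded pieces
    obtain ⟨WU, hWUdisj, hWUle, hWUsup, hWUgr⟩ := exists_compl_family FU hUmono
    obtain ⟨WV, hWVdisj, hWVle, hWVsup, hWVgr⟩ := exists_compl_family FV hVmono
    have hWUind : iSupIndep WU := by
      refine aux_indep_of_disjoint_Iio WU fun i => (hWUdisj i).mono_left ?_
      exact iSup_le fun j => iSup_le fun hj => (hWUle j).trans
        (le_iSup_of_le j (le_iSup_of_le hj le_rfl))
    have hWVind : iSupIndep WV := by
      refine aux_indep_of_disjoint_Iio WV fun i => (hWVdisj i).mono_left ?_
      exact iSup_le fun j => iSup_le fun hj => (hWVle j).trans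
        (le_iSup_of_le j (le_iSup_of_le hj le_rfl))
    have hWUtop : ⨆ i, WU i = ⊤ := by
      rw [eq_top_iff, ← hUexh]
      refine iSup_le fun i => ?_
      rw [hWUsup i]
      exact iSup_le fun j => iSup_le fun _ => le_iSup _ j
    have hWVtop : ⨆ i, WV i = ⊤ := by
      rw [eq_top_iff, ← hVexh]
      refine iSup_le fun i => ?_
      rw [hWVsup i]
      exact iSup_le fun j => iSup_le fun _ => le_iSup _ j
    have hUint : DirectSum.IsInternal WU :=
      DirectSum.isInternal_submodule_of_iSupIndep_of_iSup_eq_top hWUind hWUtop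
    have hVint : DirectSum.IsInternal WV :=
      DirectSum.isInternal_submodule_of_iSupIndep_of_iSup_eq_top hWVind hWVtop
    let eU : (⨁ α, ↥(WU α)) ≃ₗ[k] U := LinearEquiv.ofBijective (DirectSum.coeLinearMap WU) hUint
    let eV : (⨁ β, ↥(WV β)) ≃ₗ[k] V := LinearEquiv.ofBijective (DirectSum.coeLinearMap WV) hVint
    let Ψ : (⨁ p : I × J, (↥(WU p.1) ⊗[k] ↥(WV p.2))) ≃ₗ[k] U ⊗[k] V :=
      auxPsi (fun α => ↥(WU α)) (fun β => ↥(WV β)) eU eV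
    have hkey : ∀ p : I × J,
        Ψ.toLinearMap ∘ₗ DirectSum.lof k (I × J) (fun p => ↥(WU p.1) ⊗[k] ↥(WV p.2)) p =
          TensorProduct.map (WU p.1).subtype (WV p.2).subtype := by
      rintro ⟨a, b⟩
      apply TensorProduct.ext'
      intro u v
      show Ψ (DirectSum.lof k (I × J) (fun p => ↥(WU p.1) ⊗[k] ↥(WV p.2)) (a, b) (u ⊗ₜ v)) = _
      rw [show Ψ = auxPsi (fun α => ↥(WU α)) (fun β => ↥(WV β)) eU eV from rfl,
        auxPsi_lof_tmul, TensorProduct.map_tmul]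
      congr 1
      · show DirectSum.coeLinearMap WU (DirectSum.lof k I (fun α => ↥(WU α)) a u) = ↑u
        rw [DirectSum.lof_eq_of, DirectSum.coeLinearMap_of]
      · show DirectSum.coeLinearMap WV (DirectSum.lof k J (fun β => ↥(WV β)) b v) = ↑v
        rw [DirectSum.lof_eq_of, DirectSum.coeLinearMap_of]
    set G : I × J → Submodule k (U ⊗[k] V) :=
      fun p => LinearMap.range (TensorProduct.map (WU p.1).subtype (WV p.2).subtype) with hGdef
    have hGmap : ∀ p, G p = Submodule.map Ψ.toLinearMap
        (LinearMap.range (DirectSum.lof k (I × J) (fun p => ↥(WU p.1) ⊗[k] ↥(WV p.2)) p)) := by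
      intro p
      rw [← LinearMap.range_comp, hkey]
    have hGind : iSupIndep G := by
      have h1 := (aux_lof_indep (k := k)
        (fun p : I × J => ↥(WU p.1) ⊗[k] ↥(WV p.2))).map_orderIso
        (Submodule.orderIsoMapComap Ψ)
      have h2 : (Submodule.orderIsoMapComap Ψ ∘ fun p : I × J =>
          LinearMap.range (DirectSum.lof k (I × J) (fun p => ↥(WU p.1) ⊗[k] ↥(WV p.2)) p)) = G := by
        funext p
        rw [hGmap p]
        rfl
      rwa [h2] at h1
    have hG2 : ∀ p, G p = Submodule.map₂ (TensorProduct.mk k U V) (WU p.1) (WV p.2) :=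
      fun p => aux_range_map_subtype _ _
    have hranges : ∀ p : I × J,
        LinearMap.range (TensorProduct.map (FU p.1).subtype (FV p.2).subtype) =
          ⨆ q ∈ Set.Iic p, G q := by
      intro p
      rw [aux_range_map_subtype, hWUsup p.1, hWVsup p.2, Submodule.map₂_iSup_left]
      apply le_antisymm
      · refine iSup_le fun j => ?_
        rw [Submodule.map₂_iSup_left]
        refine iSup_le fun hj => ?_
        rw [Submodule.map₂_iSup_right]
        refine iSup_le fun l => ?_
        rw [Submodule.map₂_iSup_right]
        refine iSup_le fun hl => ?_
        refine le_iSup_of_le (j, l) (le_iSup_of_le ⟨hj, hl⟩ ?_)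
        rw [hG2]
      · refine iSup_le fun q => iSup_le fun hq => ?_
        rw [hG2]
        refine le_iSup_of_le q.1 ?_
        rw [Submodule.map₂_iSup_left]
        refine le_iSup_of_le hq.1 ?_
        rw [Submodule.map₂_iSup_right]
        refine le_iSup_of_le q.2 ?_
        rw [Submodule.map₂_iSup_right]
        exact le_iSup_of_le hq.2 le_rfl
    have hfiltG : ∀ γ : L, tensorFilt μ FU FV γ = ⨆ q ∈ {q : I × J | μ q ≤ γ}, G q := by
      intro γ
      apply le_antisymm
      · refine iSup_le fun p => iSup_le fun hp => ?_
        rw [hranges p]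
        refine iSup_le fun q => iSup_le fun hq => ?_
        exact le_iSup_of_le q (le_iSup_of_le (le_trans (hμmono hq) hp) le_rfl)
      · refine iSup_le fun q => iSup_le fun hq => ?_
        refine le_iSup_of_le q (le_iSup_of_le hq ?_)
        rw [hranges q]
        exact le_iSup_of_le q (le_iSup_of_le Set.self_mem_Iic le_rfl)
    intro γ
    set A : Submodule k (U ⊗[k] V) := tensorFilt μ FU FV γ with hAdef
    set B : Submodule k (U ⊗[k] V) := ⨆ q ∈ {q : I × J | μ q < γ}, G q with hBdef
    set C : Submodule k (U ⊗[k] V) := ⨆ q ∈ {q : I × J | μ q = γ}, G q with hCdef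
    have hBelow : filtBelow (tensorFilt μ FU FV) γ = B := by
      apply le_antisymm
      · refine iSup_le fun γ' => iSup_le fun hγ' => ?_
        rw [hfiltG γ']
        refine iSup_le fun q => iSup_le fun hq => ?_
        exact le_iSup_of_le q (le_iSup_of_le (lt_of_le_of_lt hq hγ') le_rfl)
      · refine iSup_le fun q => iSup_le fun hq => ?_
        refine le_iSup_of_le (μ q) (le_iSup_of_le hq ?_)
        rw [hfiltG (μ q)]
        exact le_iSup_of_le q (le_iSup_of_le le_rfl le_rfl)
    have hA : A = B ⊔ C := by
      rw [hAdef, hfiltG γ]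
      apply le_antisymm
      · refine iSup_le fun q => iSup_le fun hq => ?_
        rcases lt_or_eq_of_le (hq : μ q ≤ γ) with h | h
        · exact le_sup_of_le_left (le_iSup_of_le q (le_iSup_of_le h le_rfl))
        · exact le_sup_of_le_right (le_iSup_of_le q (le_iSup_of_le h le_rfl))
      · refine sup_le ?_ ?_
        · exact iSup_le fun q => iSup_le fun hq =>
            le_iSup_of_le q (le_iSup_of_le (le_of_lt hq) le_rfl)
        · exact iSup_le fun q => iSup_le fun hq =>
            le_iSup_of_le q (le_iSup_of_le (le_of_eq hq) le_rfl)
    have hBA : B ≤ A := hA.symm ▸ le_sup_left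
    have hCA : C ≤ A := hA.symm ▸ le_sup_right
    have hdisjBC : Disjoint B C := by
      refine aux_disjoint_biSup_biSup hGind ?_
      rw [Set.disjoint_left]
      intro q hq1 hq2
      exact absurd hq2 (ne_of_lt hq1)
    have hcompl : IsCompl (B.comap A.subtype) (C.comap A.subtype) := by
      constructor
      · rw [disjoint_def]
        intro x hxB hxC
        have : (x : U ⊗[k] V) ∈ B ⊓ C := ⟨hxB, hxC⟩
        rw [hdisjBC.eq_bot] at this
        exact Subtype.ext this
      · rw [codisjoint_iff, eq_top_iff]
        intro x _
        have hx : (x : U ⊗[k] V) ∈ B ⊔ C := hA ▸ x.2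
        obtain ⟨b, hb, c, hc, hbc⟩ := Submodule.mem_sup.mp hx
        refine Submodule.mem_sup.mpr ⟨⟨b, hBA hb⟩, hb, ⟨c, hCA hc⟩, hc, ?_⟩
        exact Subtype.ext hbc
    have hCind : iSupIndep fun q : {q : I × J | μ q = γ} => G q :=
      hGind.comp Subtype.val_injective
    have hCint := DirectSum.isInternal_biSup_submodule_of_iSupIndep
      {q : I × J | μ q = γ} hCind
    let eC : (⨁ q : {q : I × J | μ q = γ}, ↥((G q.1).comap C.subtype)) ≃ₗ[k] ↥C :=
      LinearEquiv.ofBijective (DirectSum.coeLinearMap fun q : {q : I × J | μ q = γ} =>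
        (G q.1).comap C.subtype) hCint
    have hinj : ∀ p : I × J,
        Function.Injective (TensorProduct.map (WU p.1).subtype (WV p.2).subtype) := by
      intro p
      rw [← hkey p]
      intro x y hxy
      exact DirectSum.of_injective (β := fun p : I × J => ↥(WU p.1) ⊗[k] ↥(WV p.2)) p
        (Ψ.injective hxy)
    let gU : ∀ α : I, ↥(WU α) ≃ₗ[k] filtGr FU α := fun α => (hWUgr α).some
    let gV : ∀ β : J, ↥(WV β) ≃ₗ[k] filtGr FV β := fun β => (hWVgr β).some
    let gq : ∀ q : I × J, ↥(G q) ≃ₗ[k] (filtGr FU q.1 ⊗[k] filtGr FV q.2) := fun q =>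
      (LinearEquiv.ofInjective _ (hinj q)).symm.trans
        (TensorProduct.congr (gU q.1) (gV q.2))
    let e2 : (⨁ q : {q : I × J | μ q = γ}, ↥((G q.1).comap C.subtype)) ≃ₗ[k]
        (⨁ q : {q : I × J | μ q = γ}, (filtGr FU q.1.1 ⊗[k] filtGr FV q.1.2)) :=
      DFinsupp.mapRange.linearEquiv fun q =>
        (Submodule.comapSubtypeEquivOfLe
          (le_iSup_of_le q.1 (le_iSup_of_le q.2 le_rfl) : G q.1 ≤ C)).trans (gq q.1)
    have hEq : (filtBelow (tensorFilt μ FU FV) γ).comap A.subtype = B.comap A.subtype := by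
      rw [hBelow]
    exact ⟨((((Submodule.quotEquivOfEq _ _ hEq).trans
      (Submodule.quotientEquivOfIsCompl _ _ hcompl)).trans
      (Submodule.comapSubtypeEquivOfLe hCA)).trans
      (eC.symm.trans e2))⟩
end

section
/- Let k be a field and (W, ω) a symplectic vector space over k. Suppose W is the internal direct sum of finitely many subspaces W₁, …, W_n that are pairwise orthogonal (ω(W_i, W_j) = 0 for i ≠ j) and such that the restriction of ω to each W_i is nondegenerate. Let L ⊆ W be a Lagrangian subspace. Then there exist subspaces M_i ⊆ W_i, each Lagrangian in (W_i, ω|_{W_i}), such that M₁ + ⋯ + M_n is a complement to L in W, i.e., L ∩ (M₁ + ⋯ + M_n) = 0 and L + (M₁ + ⋯ + M_n) = W. -/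
/-- The orthogonal complement `{x | ω(x,u) = 0 for all u ∈ U}` of a subspace `U` with
respect to a bilinear form `ω`. -/
def bilinOrth {k W : Type*} [Field k] [AddCommGroup W] [Module k W]
    (ω : W →ₗ[k] W →ₗ[k] k) (U : Submodule k W) : Submodule k W where
  carrier := {x : W | ∀ u ∈ U, ω x u = 0}
  zero_mem' := by intro u _; simp
  add_mem' := by
    intro a b ha hb u hu
    simp [ha u hu, hb u hu]
  smul_mem' := by
    intro c x hx u hu
    simp [hx u hu]

section Aux

variable {k W : Type*} [Field k] [AddCommGroup W] [Module k W]

lemma mem_bilinOrth {ω : W →ₗ[k] W →ₗ[k] k} {U : Submodule k W} {x : W} :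
    x ∈ bilinOrth ω U ↔ ∀ u ∈ U, ω x u = 0 := Iff.rfl

lemma omega_skew (ω : W →ₗ[k] W →ₗ[k] k) (halt : ∀ x : W, ω x x = 0) (x y : W) :
    ω x y = - ω y x := by
  have h := halt (x + y)
  simp only [map_add, LinearMap.add_apply, halt x, halt y] at h
  linear_combination h

/-- Key inductive lemma: relative version inside an ambient submodule `S`. -/
theorem key_lagrangian [FiniteDimensional k W]
    (ω : W →ₗ[k] W →ₗ[k] k) (halt : ∀ x : W, ω x x = 0) :
    ∀ (d : ℕ) (S : Submodule k W), Module.finrank k S ≤ d →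
      ∀ (n : ℕ) (Wi : Fin n → Submodule k W),
        (∀ i, Wi i ≤ S) → (⨆ i, Wi i) = S →
        (∀ i j : Fin n, i ≠ j → ∀ x ∈ Wi i, ∀ y ∈ Wi j, ω x y = 0) →
        (∀ i : Fin n, ∀ x ∈ Wi i, (∀ y ∈ Wi i, ω x y = 0) → x = 0) →
        ∀ L : Submodule k W, L ≤ S →
          (∀ x ∈ L, ∀ y ∈ L, ω x y = 0) →
          (∀ x ∈ S, (∀ y ∈ L, ω x y = 0) → x ∈ L) →
          ∃ M : Fin n → Submodule k W,
            (∀ i, M i ≤ Wi i) ∧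
            (∀ i, M i = bilinOrth ω (M i) ⊓ Wi i) ∧
            L ⊓ (⨆ i, M i) = ⊥ ∧ L ⊔ (⨆ i, M i) = S := by
  have hskew : ∀ x y : W, ω x y = - ω y x := omega_skew ω halt
  intro d
  induction d with
  | zero =>
    intro S hS n Wi hWS hsup horth hnd L hLS hiso hco
    have hSbot : S = ⊥ := by
      rw [← Submodule.finrank_eq_zero (R := k) (S := S)]
      omega
    have hLbot : L = ⊥ := le_bot_iff.mp (hSbot ▸ hLS)
    have hWbot : ∀ i, Wi i = ⊥ := fun i => le_bot_iff.mp (hSbot ▸ hWS i)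
    refine ⟨fun _ => ⊥, fun i => bot_le, fun i => ?_, by simp [hLbot], ?_⟩
    · rw [hWbot i]; simp
    · rw [hLbot, hSbot]; simp
  | succ d IH =>
    intro S hS n Wi hWS hsup horth hnd L hLS hiso hco
    by_cases hSbot : S = ⊥
    · have hLbot : L = ⊥ := le_bot_iff.mp (hSbot ▸ hLS)
      have hWbot : ∀ i, Wi i = ⊥ := fun i => le_bot_iff.mp (hSbot ▸ hWS i)
      refine ⟨fun _ => ⊥, fun i => bot_le, fun i => ?_, by simp [hLbot], ?_⟩
      · rw [hWbot i]; simp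
      · rw [hLbot, hSbot]; simp
    -- find a nonzero block
    obtain ⟨i0, hi0⟩ : ∃ i, Wi i ≠ ⊥ := by
      by_contra h
      push_neg at h
      exact hSbot (by rw [← hsup]; simp [h])
    obtain ⟨w0, hw0W, hw0⟩ := Submodule.exists_mem_ne_zero_of_ne_bot hi0
    have hy0 : ∃ y ∈ Wi i0, ω w0 y ≠ 0 := by
      by_contra h
      push_neg at h
      exact hw0 (hnd i0 w0 hw0W h)
    obtain ⟨y0, hy0W, hy0⟩ := hy0
    have hu0W : (ω w0 y0)⁻¹ • y0 ∈ Wi i0 := Submodule.smul_mem _ _ hy0W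
    have hwu0 : ω w0 ((ω w0 y0)⁻¹ • y0) = 1 := by
      rw [map_smul, smul_eq_mul, inv_mul_cancel₀ hy0]
    set u0 : W := (ω w0 y0)⁻¹ • y0 with hu0def
    -- choose (t, s, l0) : t,s ∈ Wi i0 with ω t s = 1, l0 ∈ L with ω l0 t = 1, t ∉ L
    obtain ⟨t, s, l0, htW, hsW, hts, hl0L, hl0t, htL⟩ :
        ∃ t s l0 : W, t ∈ Wi i0 ∧ s ∈ Wi i0 ∧ ω t s = 1 ∧ l0 ∈ L ∧ ω l0 t = 1 ∧ t ∉ L := by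
      by_cases hwL : w0 ∈ L
      · refine ⟨u0, -w0, w0, hu0W, neg_mem hw0W, ?_, hwL, hwu0, ?_⟩
        · rw [map_neg, hskew u0 w0, hwu0]; ring
        · intro hu
          have := hiso w0 hwL u0 hu
          rw [hwu0] at this
          exact one_ne_zero this
      · have hy1 : ∃ y ∈ L, ω w0 y ≠ 0 := by
          by_contra h
          push_neg at h
          exact hwL (hco w0 (hWS i0 hw0W) h)
        obtain ⟨y1, hy1L, hy1⟩ := hy1
        have hy1' : ω y1 w0 ≠ 0 := by
          rw [hskew y1 w0]
          simpa using hy1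
        refine ⟨w0, u0, (ω y1 w0)⁻¹ • y1, hw0W, hu0W, hwu0,
          Submodule.smul_mem _ _ hy1L, ?_, hwL⟩
        rw [map_smul, LinearMap.smul_apply, smul_eq_mul, inv_mul_cancel₀ hy1']
    clear hw0 hy0 hwu0 hu0W hu0def hy0W
    have hst : ω s t = -1 := by rw [hskew s t, hts]
    have htS : t ∈ S := hWS i0 htW
    have hsS : s ∈ S := hWS i0 hsW
    -- the reduction data
    set K : Submodule k W := LinearMap.ker (ω.flip t) ⊓ LinearMap.ker (ω.flip s) with hKdef
    have memK : ∀ x : W, x ∈ K ↔ (ω x t = 0 ∧ ω x s = 0) := by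
      intro x
      simp [hKdef, Submodule.mem_inf, LinearMap.mem_ker, LinearMap.flip_apply]
    set S' : Submodule k W := S ⊓ K with hS'def
    set Wi' : Fin n → Submodule k W := fun j => Wi j ⊓ S' with hWi'def
    have hdec : ∀ x : W, (x - ω x s • t + ω x t • s) ∈ K := by
      intro x
      rw [memK]
      constructor
      · simp only [map_sub, map_add, map_smul, LinearMap.sub_apply, LinearMap.add_apply,
          LinearMap.smul_apply, smul_eq_mul, halt t, hst]
        ring
      · simp only [map_sub, map_add, map_smul, LinearMap.sub_apply, LinearMap.add_apply,
          LinearMap.smul_apply, smul_eq_mul, halt s, hts]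
        ring
    have htK : t ∉ K := by
      intro h
      have := ((memK t).mp h).2
      rw [hts] at this
      exact one_ne_zero this
    have hS'lt : S' < S := by
      refine lt_of_le_of_ne inf_le_left ?_
      intro h
      have : t ∈ S' := h ▸ htS
      exact htK (Submodule.mem_inf.mp this).2
    have hrank' : Module.finrank k S' ≤ d := by
      have h1 := Submodule.finrank_lt_finrank_of_lt hS'lt
      omega
    have hKj : ∀ j, j ≠ i0 → Wi j ≤ K := by
      intro j hj x hx
      rw [memK]
      exact ⟨horth j i0 hj x hx t htW, horth j i0 hj x hx s hsW⟩
    have hWi'j : ∀ j, j ≠ i0 → Wi' j = Wi j := by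
      intro j hj
      show Wi j ⊓ S' = Wi j
      exact inf_eq_left.mpr (le_inf (hWS j) (hKj j hj))
    have hWS' : ∀ j, Wi' j ≤ S' := fun j => inf_le_right
    have hWi'le : ∀ j, Wi' j ≤ Wi j := fun j => inf_le_left
    have hsup' : (⨆ j, Wi' j) = S' := by
      apply le_antisymm (iSup_le hWS')
      intro x hx
      obtain ⟨hxS, hxK⟩ := Submodule.mem_inf.mp hx
      rw [← hsup, iSup_split_single Wi i0] at hxS
      obtain ⟨y, hy, z, hz, rfl⟩ := Submodule.mem_sup.mp hxS
      have hzK : z ∈ K :=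
        (iSup_le fun j => iSup_le fun hj => hKj j hj) hz
      have hyK : y ∈ K := by
        have e : y = (y + z) - z := by abel
        rw [e]
        exact sub_mem hxK hzK
      have hyWi' : y ∈ Wi' i0 :=
        Submodule.mem_inf.mpr ⟨hy, Submodule.mem_inf.mpr ⟨hWS i0 hy, hyK⟩⟩
      refine add_mem ((le_iSup Wi' i0) hyWi') ?_
      exact (iSup_le fun j => iSup_le fun hj =>
        le_trans (le_of_eq (hWi'j j hj).symm) (le_iSup Wi' j)) hz
    have horth' : ∀ i j : Fin n, i ≠ j → ∀ x ∈ Wi' i, ∀ y ∈ Wi' j, ω x y = 0 :=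
      fun i j hij x hx y hy =>
        horth i j hij x (hWi'le i hx) y (hWi'le j hy)
    have hnd' : ∀ j : Fin n, ∀ x ∈ Wi' j, (∀ y ∈ Wi' j, ω x y = 0) → x = 0 := by
      intro j x hx h
      by_cases hj : j = i0
      · subst hj
        have hxW : x ∈ Wi j := hWi'le j hx
        have hxK : x ∈ K := (Submodule.mem_inf.mp (Submodule.mem_inf.mp hx).2).2
        obtain ⟨hxt, hxs⟩ := (memK x).mp hxK
        apply hnd j x hxW
        intro y hyW
        have hpW : (y - ω y s • t + ω y t • s) ∈ Wi j :=
          add_mem (sub_mem hyW (Submodule.smul_mem _ _ htW)) (Submodule.smul_mem _ _ hsW)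
        have hp : (y - ω y s • t + ω y t • s) ∈ Wi' j :=
          Submodule.mem_inf.mpr ⟨hpW, Submodule.mem_inf.mpr ⟨hWS j hpW, hdec y⟩⟩
        have h0 := h _ hp
        simp only [map_sub, map_add, map_smul, smul_eq_mul] at h0
        linear_combination h0 + ω y s * hxt - ω y t * hxs
      · rw [hWi'j j hj] at hx h
        exact hnd j x hx h
    -- the reduced Lagrangian
    set Lt : Submodule k W := L ⊓ LinearMap.ker (ω.flip t) with hLtdef
    have memLt : ∀ x : W, x ∈ Lt ↔ x ∈ L ∧ ω x t = 0 := by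
      intro x
      simp [hLtdef, Submodule.mem_inf, LinearMap.mem_ker, LinearMap.flip_apply]
    set L' : Submodule k W := (Lt ⊔ Submodule.span k {t}) ⊓ K with hL'def
    have memL' : ∀ x : W, x ∈ L' → ∃ (l : W) (c : k), l ∈ L ∧ ω l t = 0 ∧ x = l + c • t ∧ x ∈ K := by
      intro x hx
      obtain ⟨hx1, hxK⟩ := Submodule.mem_inf.mp hx
      obtain ⟨l, hl, z, hz, hlz⟩ := Submodule.mem_sup.mp hx1
      obtain ⟨c, hc⟩ := Submodule.mem_span_singleton.mp hz
      obtain ⟨hlL, hlt⟩ := (memLt l).mp hl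
      exact ⟨l, c, hlL, hlt, by rw [← hlz, ← hc], hxK⟩
    have mkL' : ∀ (l : W) (c : k), l ∈ L → ω l t = 0 → l + c • t ∈ K → l + c • t ∈ L' := by
      intro l c hl hlt hK
      refine Submodule.mem_inf.mpr ⟨?_, hK⟩
      exact add_mem (Submodule.mem_sup_left ((memLt l).mpr ⟨hl, hlt⟩))
        (Submodule.mem_sup_right (Submodule.smul_mem _ _ (Submodule.mem_span_singleton_self t)))
    have hL'S' : L' ≤ S' := by
      intro x hx
      obtain ⟨l, c, hlL, hlt, rfl, hxK⟩ := memL' x hx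
      exact Submodule.mem_inf.mpr ⟨add_mem (hLS hlL) (Submodule.smul_mem _ _ htS), hxK⟩
    have hiso' : ∀ x ∈ L', ∀ y ∈ L', ω x y = 0 := by
      intro x hx y hy
      obtain ⟨l, c, hlL, hlt, rfl, _⟩ := memL' x hx
      obtain ⟨l', c', hl'L, hl't, rfl, _⟩ := memL' y hy
      have h1 : ω l l' = 0 := hiso l hlL l' hl'L
      have h2 : ω t l' = 0 := by rw [hskew t l', hl't]; ring
      simp only [map_add, map_smul, LinearMap.add_apply, LinearMap.smul_apply, smul_eq_mul]
      rw [h1, h2, hlt, halt t]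
      ring
    have hco' : ∀ x ∈ S', (∀ y ∈ L', ω x y = 0) → x ∈ L' := by
      intro x hxS' hx
      obtain ⟨hxS, hxK⟩ := Submodule.mem_inf.mp hxS'
      obtain ⟨hxt, hxs⟩ := (memK x).mp hxK
      -- step 1: x is orthogonal to Lt
      have hxLt : ∀ l : W, l ∈ L → ω l t = 0 → ω x l = 0 := by
        intro l hlL hlt
        have hin : l + (- ω l s) • t ∈ K := by
          rw [memK]
          constructor
          · simp only [map_add, map_smul, LinearMap.add_apply, LinearMap.smul_apply,
              smul_eq_mul, halt t, hlt]
            ring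
          · simp only [map_add, map_smul, LinearMap.add_apply, LinearMap.smul_apply,
              smul_eq_mul, hts]
            ring
        have h0 := hx _ (mkL' l (- ω l s) hlL hlt hin)
        simp only [map_add, map_smul, smul_eq_mul] at h0
        linear_combination h0 + ω l s * hxt
      -- step 2
      have hxt2 : ∀ y ∈ L, ω (x + ω x l0 • t) y = 0 := by
        intro y hyL
        have hy'L : y - ω y t • l0 ∈ L := sub_mem hyL (Submodule.smul_mem _ _ hl0L)
        have hy't : ω (y - ω y t • l0) t = 0 := by
          simp only [map_sub, map_smul, LinearMap.sub_apply, LinearMap.smul_apply,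
            smul_eq_mul, hl0t]
          ring
        have e1 : ω x (y - ω y t • l0) = 0 := hxLt _ hy'L hy't
        simp only [map_sub, map_smul, smul_eq_mul] at e1
        have e2 : ω t (y - ω y t • l0) = 0 := by
          rw [hskew t _, hy't]; ring
        simp only [map_sub, map_smul, smul_eq_mul] at e2
        have e3 : ω t l0 = -1 := by rw [hskew t l0, hl0t]
        simp only [map_add, map_smul, LinearMap.add_apply, LinearMap.smul_apply, smul_eq_mul]
        linear_combination e1 + ω x l0 * e2 + ω x l0 * ω y t * e3
      have hxL2 : x + ω x l0 • t ∈ L :=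
        hco _ (add_mem hxS (Submodule.smul_mem _ _ htS)) hxt2
      have hxL2t : ω (x + ω x l0 • t) t = 0 := by
        simp only [map_add, map_smul, LinearMap.add_apply, LinearMap.smul_apply,
          smul_eq_mul, halt t, hxt]
        ring
      have heq : (x + ω x l0 • t) + (- ω x l0) • t = x := by
        rw [neg_smul]; abel
      have := mkL' (x + ω x l0 • t) (- ω x l0) hxL2 hxL2t (by rw [heq]; exact hxK)
      rwa [heq] at this
    -- apply the inductive hypothesis
    obtain ⟨M', hM'W, hM'Lag, hM'inf, hM'sup⟩ :=
      IH S' hrank' n Wi' hWS' hsup' horth' hnd' L' hL'S' hiso' hco'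
    have hM'K : ∀ j, M' j ≤ K := fun j => (hM'W j).trans ((hWS' j).trans inf_le_right)
    have hM'S : ∀ j, M' j ≤ S := fun j => (hM'W j).trans ((hWS' j).trans inf_le_left)
    have hM'iso : ∀ j, ∀ x ∈ M' j, ∀ y ∈ M' j, ω x y = 0 := by
      intro j x hx y hy
      have hx' : x ∈ bilinOrth ω (M' j) := by
        rw [hM'Lag j] at hx
        exact (Submodule.mem_inf.mp hx).1
      exact hx' y hy
    have hM'S' : (⨆ j, M' j) ≤ S' := by
      rw [← hsup']
      exact iSup_mono hM'W
    classical
    set M : Fin n → Submodule k W :=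
      Function.update M' i0 (M' i0 ⊔ Submodule.span k {t}) with hMdef
    have hMi0 : M i0 = M' i0 ⊔ Submodule.span k {t} := by
      rw [hMdef]; simp
    have hMj : ∀ j, j ≠ i0 → M j = M' j := by
      intro j hj
      rw [hMdef]
      simp [Function.update_of_ne hj]
    have hM'leM : ∀ j, M' j ≤ M j := by
      intro j
      by_cases hj : j = i0
      · rw [hj, hMi0]; exact le_sup_left
      · rw [hMj j hj]
    have htM : t ∈ M i0 := by
      rw [hMi0]
      exact Submodule.mem_sup_right (Submodule.mem_span_singleton_self t)
    have hsupM : (⨆ j, M j) = (⨆ j, M' j) ⊔ Submodule.span k {t} := by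
      apply le_antisymm
      · apply iSup_le
        intro j
        by_cases hj : j = i0
        · rw [hj, hMi0]
          exact sup_le_sup (le_iSup M' i0) le_rfl
        · rw [hMj j hj]
          exact le_sup_of_le_left (le_iSup M' j)
      · refine sup_le (iSup_le fun j => (hM'leM j).trans (le_iSup M j)) ?_
        exact le_trans (hMi0 ▸ le_sup_right) (le_iSup M i0)
    -- conclusion 1
    have hMW : ∀ j, M j ≤ Wi j := by
      intro j
      by_cases hj : j = i0
      · rw [hj, hMi0]
        exact sup_le ((hM'W i0).trans (hWi'le i0))
          ((Submodule.span_singleton_le_iff_mem t _).mpr htW)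
      · rw [hMj j hj]
        exact (hM'W j).trans (hWi'le j)
    -- conclusion 2
    have hMLag : ∀ j, M j = bilinOrth ω (M j) ⊓ Wi j := by
      intro j
      by_cases hj : j = i0
      · rw [hj]
        apply le_antisymm
        · refine le_inf ?_ (hMW i0)
          intro x hx
          rw [hMi0] at hx
          obtain ⟨m, hm, z1, hz1, hmz⟩ := Submodule.mem_sup.mp hx
          obtain ⟨c, hc⟩ := Submodule.mem_span_singleton.mp hz1
          rw [mem_bilinOrth]
          intro z hz
          rw [hMi0] at hz
          obtain ⟨m', hm', z2, hz2, hmz'⟩ := Submodule.mem_sup.mp hz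
          obtain ⟨c', hc'⟩ := Submodule.mem_span_singleton.mp hz2
          rw [← hmz, ← hc, ← hmz', ← hc']
          have e1 : ω m m' = 0 := hM'iso i0 m hm m' hm'
          have e2 : ω m t = 0 := ((memK m).mp (hM'K i0 hm)).1
          have e3 : ω m' t = 0 := ((memK m').mp (hM'K i0 hm')).1
          have e4 : ω t m' = 0 := by rw [hskew t m', e3]; ring
          simp only [map_add, map_smul, LinearMap.add_apply, LinearMap.smul_apply, smul_eq_mul]
          rw [e1, e2, e4, halt t]
          ring
        · intro x hx
          obtain ⟨hxB, hxW⟩ := Submodule.mem_inf.mp hx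
          rw [mem_bilinOrth] at hxB
          have hxt : ω x t = 0 := hxB t htM
          have hpK := hdec x
          have hpW : (x - ω x s • t + ω x t • s) ∈ Wi i0 :=
            add_mem (sub_mem hxW (Submodule.smul_mem _ _ htW)) (Submodule.smul_mem _ _ hsW)
          have hpWi' : (x - ω x s • t + ω x t • s) ∈ Wi' i0 :=
            Submodule.mem_inf.mpr ⟨hpW, Submodule.mem_inf.mpr ⟨hWS i0 hpW, hpK⟩⟩
          have hpB : (x - ω x s • t + ω x t • s) ∈ bilinOrth ω (M' i0) := by
            rw [mem_bilinOrth]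
            intro z hz
            have e1 : ω x z = 0 := hxB z (hM'leM i0 hz)
            obtain ⟨ezt, ezs⟩ := (memK z).mp (hM'K i0 hz)
            have e2 : ω t z = 0 := by rw [hskew t z, ezt]; ring
            have e3 : ω s z = 0 := by rw [hskew s z, ezs]; ring
            simp only [map_sub, map_add, map_smul, LinearMap.sub_apply, LinearMap.add_apply,
              LinearMap.smul_apply, smul_eq_mul]
            rw [e1, e2, e3]
            ring
          have hpM' : (x - ω x s • t + ω x t • s) ∈ M' i0 := by
            rw [hM'Lag i0]
            exact Submodule.mem_inf.mpr ⟨hpB, hpWi'⟩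
          have hx2 : x = (x - ω x s • t + ω x t • s) + ω x s • t := by
            rw [hxt, zero_smul]
            abel
          rw [hMi0, hx2]
          exact add_mem (Submodule.mem_sup_left hpM')
            (Submodule.mem_sup_right (Submodule.smul_mem _ _ (Submodule.mem_span_singleton_self t)))
      · rw [hMj j hj]
        apply le_antisymm
        · refine le_inf ?_ ((hMj j hj) ▸ hMW j)
          intro x hx
          rw [mem_bilinOrth]
          intro z hz
          exact hM'iso j x hx z hz
        · intro x hx
          obtain ⟨hxB, hxW⟩ := Submodule.mem_inf.mp hx
          have : x ∈ bilinOrth ω (M' j) ⊓ Wi' j :=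
            Submodule.mem_inf.mpr ⟨hxB, (hWi'j j hj).symm ▸ hxW⟩
          rw [← hM'Lag j] at this
          exact this
    -- conclusion 3
    have hinfM : L ⊓ (⨆ j, M j) = ⊥ := by
      rw [eq_bot_iff]
      intro x hx
      obtain ⟨hxL, hxM⟩ := Submodule.mem_inf.mp hx
      rw [hsupM] at hxM
      obtain ⟨m, hm, z, hz, hmz⟩ := Submodule.mem_sup.mp hxM
      obtain ⟨c, hc⟩ := Submodule.mem_span_singleton.mp hz
      have hxeq : x = m + c • t := by rw [← hmz, ← hc]
      have hmK : m ∈ K := (Submodule.mem_inf.mp (hM'S' hm)).2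
      have hmt : ω m t = 0 := ((memK m).mp hmK).1
      have h1 : ω (m + c • t) t = 0 := by
        simp only [map_add, map_smul, LinearMap.add_apply, LinearMap.smul_apply,
          smul_eq_mul, halt t, hmt]
        ring
      have heq : (m + c • t) + (- c) • t = m := by rw [neg_smul]; abel
      have h3 := mkL' (m + c • t) (- c) (hxeq ▸ hxL) h1 (by rw [heq]; exact hmK)
      rw [heq] at h3
      have h5 : m = 0 := by
        have : m ∈ L' ⊓ (⨆ j, M' j) := Submodule.mem_inf.mpr ⟨h3, hm⟩
        rw [hM'inf] at this
        simpa using this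
      rw [hxeq, h5, zero_add] at hxL ⊢
      by_cases hcz : c = 0
      · simp [hcz]
      · exfalso
        apply htL
        have := Submodule.smul_mem L c⁻¹ hxL
        rwa [smul_smul, inv_mul_cancel₀ hcz, one_smul] at this
    -- conclusion 4
    have hsupLM : L ⊔ (⨆ j, M j) = S := by
      apply le_antisymm
      · exact sup_le hLS (iSup_le fun j => (hMW j).trans (hWS j))
      · intro x hxS
        have hx1t : ω (x - ω x t • l0) t = 0 := by
          simp only [map_sub, map_smul, LinearMap.sub_apply, LinearMap.smul_apply,
            smul_eq_mul, hl0t]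
          ring
        set x1 : W := x - ω x t • l0 with hx1def
        have hx2t : ω (x1 - ω x1 s • t) t = 0 := by
          simp only [map_sub, map_smul, LinearMap.sub_apply, LinearMap.smul_apply,
            smul_eq_mul, halt t, hx1t]
          ring
        have hx2s : ω (x1 - ω x1 s • t) s = 0 := by
          simp only [map_sub, map_smul, LinearMap.sub_apply, LinearMap.smul_apply,
            smul_eq_mul, hts]
          ring
        have hx1S : x1 ∈ S := sub_mem hxS (Submodule.smul_mem _ _ (hLS hl0L))
        have hx2S : x1 - ω x1 s • t ∈ S := sub_mem hx1S (Submodule.smul_mem _ _ htS)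
        have hx2S' : x1 - ω x1 s • t ∈ S' :=
          Submodule.mem_inf.mpr ⟨hx2S, (memK _).mpr ⟨hx2t, hx2s⟩⟩
        rw [← hM'sup] at hx2S'
        have hle : L' ⊔ (⨆ j, M' j) ≤ L ⊔ (⨆ j, M j) := by
          apply sup_le
          · intro z hz
            obtain ⟨l, c, hlL, _, rfl, _⟩ := memL' z hz
            exact add_mem (Submodule.mem_sup_left hlL)
              (Submodule.mem_sup_right ((le_iSup M i0) (Submodule.smul_mem _ _ htM)))
          · exact le_sup_of_le_right (iSup_mono hM'leM)
        have hx2mem := hle hx2S'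
        have hxeq : x = (x1 - ω x1 s • t) + ω x1 s • t + ω x t • l0 := by
          rw [hx1def]; abel
        rw [hxeq]
        exact add_mem (add_mem hx2mem
            (Submodule.mem_sup_right ((le_iSup M i0) (Submodule.smul_mem _ _ htM))))
          (Submodule.mem_sup_left (Submodule.smul_mem _ _ hl0L))
    exact ⟨M, hMW, hMLag, hinfM, hsupLM⟩

end Aux

/-- Let `(W, ω)` be a symplectic vector space over `k` which is the internal
direct sum of pairwise orthogonal subspaces `W i` on each of which `ω` restricts to a
nondegenerate form.  Then any Lagrangian `L ⊆ W` admits a complement of the form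
`M 1 + ⋯ + M n` with each `M i` Lagrangian in `W i`. -/
theorem exists_lagrangian_complement_in_orthogonal_decomposition
    {k W : Type*} [Field k] [AddCommGroup W] [Module k W] [FiniteDimensional k W]
    (ω : W →ₗ[k] W →ₗ[k] k)
    (halt : ∀ x : W, ω x x = 0)
    (hnondeg : ∀ x : W, (∀ y : W, ω x y = 0) → x = 0)
    (n : ℕ) (Wi : Fin n → Submodule k W)
    (hinternal : DirectSum.IsInternal Wi)
    (horth : ∀ i j : Fin n, i ≠ j → ∀ x ∈ Wi i, ∀ y ∈ Wi j, ω x y = 0)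
    (hnondegi : ∀ i : Fin n, ∀ x ∈ Wi i, (∀ y ∈ Wi i, ω x y = 0) → x = 0)
    (L : Submodule k W) (hLag : L = bilinOrth ω L) :
    ∃ M : Fin n → Submodule k W,
      (∀ i, M i ≤ Wi i) ∧
      (∀ i, M i = bilinOrth ω (M i) ⊓ Wi i) ∧
      L ⊓ (⨆ i, M i) = ⊥ ∧ L ⊔ (⨆ i, M i) = ⊤ := by
  have hiso : ∀ x ∈ L, ∀ y ∈ L, ω x y = 0 := by
    intro x hx y hy
    have hx' : x ∈ bilinOrth ω L := hLag ▸ hx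
    exact hx' y hy
  have hco : ∀ x ∈ (⊤ : Submodule k W), (∀ y ∈ L, ω x y = 0) → x ∈ L := by
    intro x _ h
    rw [hLag]
    exact h
  have hsup : (⨆ i, Wi i) = ⊤ := hinternal.submodule_iSup_eq_top
  obtain ⟨M, h1, h2, h3, h4⟩ :=
    key_lagrangian ω halt (Module.finrank k (⊤ : Submodule k W)) ⊤ le_rfl n Wi
      (fun _ => le_top) hsup horth hnondegi L le_top hiso hco
  exact ⟨M, h1, h2, h3, h4⟩
end

section
/- Let L/K be a finite Galois extension of fields and l a prime number not dividing the degree [L:K]. If a ∈ Lˣ satisfies σ(a)·a⁻¹ ∈ (Lˣ)^l for every σ ∈ Gal(L/K), then there exists b ∈ Kˣ such that a·b⁻¹ ∈ (Lˣ)^l. -/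
/-- If `L/K` is a finite Galois extension, `l` a prime not dividing `[L:K]`,
and `a ∈ Lˣ` satisfies `σ(a)·a⁻¹ ∈ (Lˣ)^l` for every `σ ∈ Gal(L/K)`, then there is
`b ∈ Kˣ` with `a·b⁻¹ ∈ (Lˣ)^l`. -/
theorem exists_invariant_representative_mod_lth_powers
    {K L : Type*} [Field K] [Field L] [Algebra K L] [FiniteDimensional K L] [IsGalois K L]
    (l : ℕ) (hl : l.Prime) (hdvd : ¬ l ∣ Module.finrank K L)
    (a : Lˣ) (ha : ∀ σ : L ≃ₐ[K] L, ∃ c : Lˣ, σ (a : L) * (a : L)⁻¹ = (c : L) ^ l) :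
    ∃ b : Kˣ, ∃ c : Lˣ, (a : L) * (algebraMap K L (b : K))⁻¹ = (c : L) ^ l := by
  classical
  set n := Module.finrank K L with hn
  choose c hc using ha
  -- σ a = (c σ)^l * a
  have hca : ∀ σ : L ≃ₐ[K] L, σ (a : L) = ((c σ : L)) ^ l * (a : L) := by
    intro σ
    rw [← hc σ, inv_mul_cancel_right₀ a.ne_zero]
  have hcard : Fintype.card (L ≃ₐ[K] L) = n := by
    rw [← Nat.card_eq_fintype_card]; exact IsGalois.card_aut_eq_finrank K L
  set C : Lˣ := ∏ σ : L ≃ₐ[K] L, c σ with hC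
  have hN : algebraMap K L (Algebra.norm K (a : L)) = ((C : L)) ^ l * (a : L) ^ n := by
    rw [Algebra.norm_eq_prod_automorphisms]
    calc ∏ σ : L ≃ₐ[K] L, σ (a : L) = ∏ σ : L ≃ₐ[K] L, ((c σ : L)) ^ l * (a : L) := by
          exact Finset.prod_congr rfl fun σ _ => hca σ
      _ = (∏ σ : L ≃ₐ[K] L, ((c σ : L)) ^ l) * (a : L) ^ n := by
          rw [Finset.prod_mul_distrib, Finset.prod_const, Finset.card_univ, hcard]
      _ = ((C : L)) ^ l * (a : L) ^ n := by
          rw [hC]; push_cast; rw [Finset.prod_pow]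
  have hNne : Algebra.norm K (a : L) ≠ 0 := by
    rw [Algebra.norm_ne_zero_iff]
    exact a.ne_zero
  set b0 : Kˣ := Units.mk0 _ hNne with hb0
  set f : Kˣ →* Lˣ := Units.map (algebraMap K L : K →* L) with hf
  have hkey : f b0 = C ^ l * a ^ n := by
    ext
    push_cast [hf, hb0]
    exact hN
  -- Bezout
  have hcop : Nat.Coprime l n := (Nat.Prime.coprime_iff_not_dvd hl).2 hdvd
  obtain ⟨u, v, huv⟩ : ∃ u v : ℤ, (l : ℤ) * u + (n : ℤ) * v = 1 := by
    refine ⟨Nat.gcdA l n, Nat.gcdB l n, ?_⟩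
    have := Nat.gcd_eq_gcd_ab l n
    rw [hcop] at this
    push_cast at this
    linarith
  refine ⟨b0 ^ v, a ^ u * C ^ (-v), ?_⟩
  have hmain : a * ((f b0) ^ v)⁻¹ = (a ^ u * C ^ (-v)) ^ (l : ℤ) := by
    rw [hkey, mul_zpow, mul_zpow, ← zpow_natCast a, ← zpow_natCast C,
      ← zpow_mul, ← zpow_mul, ← zpow_mul, ← zpow_mul, mul_inv, ← zpow_neg, ← zpow_neg]
    rw [show u * (l:ℤ) = 1 + -((n:ℤ) * v) by linarith, zpow_add, zpow_one]
    ring_nf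
    rw [mul_comm (C ^ (-((l:ℤ) * v))) (a ^ (-(v * (n:ℤ)))), ← mul_assoc]
  have hmain' : a * (f (b0 ^ v))⁻¹ = (a ^ u * C ^ (-v)) ^ l := by
    rw [map_zpow, hmain, zpow_natCast]
  have := congrArg (Units.val) hmain'
  push_cast [hf] at this
  convert this using 3
  · rfl
  all_goals simp
end

section
/- Let L/K be a finite Galois extension of fields with Galois group G = Gal(L/K), and let l be a prime number not dividing the order of G. Let c : G → Lˣ be a 1-cocycle with values in the subgroup of l-th powers: c(σ) ∈ (Lˣ)^l for all σ ∈ G, and c(στ) = c(σ)·σ(c(τ)) for all σ, τ ∈ G. Then c is a coboundary with values in the l-th powers: there exists e ∈ (Lˣ)^l such that c(σ) = σ(e)·e⁻¹ for all σ ∈ G. (In other words, H¹(Gal(L/K), (Lˣ)^l) = 0.) -/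
/-- For a finite Galois extension `L/K` with group `G` and a prime `l` not
dividing `|G|`, every 1-cocycle `c : G → Lˣ` with values in the subgroup of `l`-th powers
is a coboundary with values in the `l`-th powers:
`H¹(Gal(L/K), (Lˣ)^l) = 0`. -/
theorem onecocycle_lth_powers_is_coboundary
    {K L : Type*} [Field K] [Field L] [Algebra K L] [FiniteDimensional K L] [IsGalois K L]
    (l : ℕ) (hl : l.Prime) (hdvd : ¬ l ∣ Nat.card (L ≃ₐ[K] L))
    (c : (L ≃ₐ[K] L) → Lˣ)
    (hpow : ∀ σ : L ≃ₐ[K] L, ∃ d : Lˣ, c σ = d ^ l)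
    (hcoc : ∀ σ τ : L ≃ₐ[K] L, (c (σ * τ) : L) = (c σ : L) * σ (c τ : L)) :
    ∃ e : Lˣ, (∃ d : Lˣ, e = d ^ l) ∧
      ∀ σ : L ≃ₐ[K] L, (c σ : L) = σ (e : L) * (e : L)⁻¹ := by
  classical
  choose d hd using hpow
  have hcocU : ∀ σ τ : L ≃ₐ[K] L, c (σ * τ) = c σ * Units.map σ (c τ) := fun σ τ =>
    Units.ext (by simpa using hcoc σ τ)
  set n := Nat.card (L ≃ₐ[K] L) with hn
  -- Bezout
  have hcop : Nat.Coprime n l := ((Nat.Prime.coprime_iff_not_dvd hl).2 hdvd).symm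
  obtain ⟨u, v, huv⟩ : ∃ u v : ℤ, (n : ℤ) * u + (l : ℤ) * v = 1 := by
    refine ⟨Int.gcdA n l, Int.gcdB n l, ?_⟩
    have := Int.gcd_eq_gcd_ab (n : ℤ) (l : ℤ)
    rw [Int.gcd_natCast_natCast, hcop] at this
    exact_mod_cast this.symm
  -- the norm-like element b
  set b : Lˣ := ∏ τ : (L ≃ₐ[K] L), c τ with hbdef
  have hb : ∀ σ : L ≃ₐ[K] L, (c σ) ^ n = b * (Units.map σ b)⁻¹ := by
    intro σ
    have h1 : ∏ τ : (L ≃ₐ[K] L), c (σ * τ) = b :=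
      Fintype.prod_bijective (σ * ·) (Group.mulLeft_bijective σ) _ _ (fun τ => rfl)
    have h2 : ∏ τ : (L ≃ₐ[K] L), c (σ * τ) = (c σ) ^ n * Units.map σ b := by
      simp only [hcocU, Finset.prod_mul_distrib, Finset.prod_const, map_prod, hbdef]
      rw [hn, Nat.card_eq_fintype_card, Finset.card_univ]
    rw [h2] at h1
    rw [eq_mul_inv_iff_mul_eq, h1]
  -- b is an l-th power
  have hbβ : b = (∏ τ : (L ≃ₐ[K] L), d τ) ^ l := by
    rw [hbdef, ← Finset.prod_pow]
    exact Finset.prod_congr rfl fun τ _ => hd τ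
  set β : Lˣ := ∏ τ : (L ≃ₐ[K] L), d τ
  -- Hilbert 90 applied to c^v
  have hc' : groupCohomology.IsMulCocycle₁ (fun σ : L ≃ₐ[K] L => (c σ) ^ v) := by
    intro g h
    simp only [AlgEquiv.smul_units_def, hcocU g h, mul_zpow, map_zpow]
    exact mul_comm _ _
  obtain ⟨y, hy⟩ :=
    groupCohomology.isMulCoboundary₁_of_isMulCocycle₁_of_aut_to_units _ hc'
  have hy' : ∀ σ : L ≃ₐ[K] L, (c σ) ^ v = Units.map σ y * y⁻¹ := by
    intro σ
    have h := (hy σ).symm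
    simp only [AlgEquiv.smul_units_def, div_eq_mul_inv] at h
    exact h
  refine ⟨(β ^ (-u) * y) ^ l, ⟨β ^ (-u) * y, rfl⟩, ?_⟩
  intro σ
  have key : c σ = Units.map σ ((β ^ (-u) * y) ^ l) * ((β ^ (-u) * y) ^ l)⁻¹ := by
    have he : (β ^ (-u) * y) ^ l = b ^ (-u) * y ^ (l : ℤ) := by
      rw [hbβ, ← zpow_natCast (β ^ (-u) * y) l, ← zpow_natCast β l]
      rw [mul_zpow, ← zpow_mul, ← zpow_mul, mul_comm (-u) (l : ℤ)]
    rw [he, map_mul, map_zpow, map_zpow]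
    calc c σ = (c σ) ^ ((n : ℤ) * u + (l : ℤ) * v) := by rw [huv, zpow_one]
      _ = ((c σ) ^ (n : ℤ)) ^ u * ((c σ) ^ v) ^ (l : ℤ) := by
          rw [zpow_add, mul_comm (l : ℤ) v, zpow_mul, zpow_mul]
      _ = (b * (Units.map σ b)⁻¹) ^ u * (Units.map σ y * y⁻¹) ^ (l : ℤ) := by
          rw [zpow_natCast, hb σ, hy' σ]
      _ = Units.map σ b ^ (-u) * Units.map σ y ^ (l : ℤ) * (b ^ (-u) * y ^ (l : ℤ))⁻¹ := by
          simp only [mul_zpow, mul_inv, inv_zpow', zpow_neg]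
          simp [mul_comm, mul_left_comm, mul_assoc]
  have := congrArg (Units.val) key
  simpa [Units.val_mul, Units.coe_map, MonoidHom.coe_coe] using this
end

section
/- Let K be a number field and T a finite set of finite places of K whose classes generate ClassGroup K. Let D be a function assigning an integer D(v) to each finite place v of K, with D(v) = 0 for all but finitely many v and D(v) = 0 for all v ∈ T. Then there exists b ∈ Kˣ such that v(b) = D(v) for every finite place v ∉ T. -/
open IsDedekindDomain NumberField
open scoped nonZeroDivisors
open FractionalIdeal
open scoped Classical

lemma valuation_eq_ofAdd_neg_count {R : Type*} [CommRing R] [IsDedekindDomain R]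
    {K : Type*} [Field K] [Algebra R K] [IsFractionRing R K]
    (v : HeightOneSpectrum R) {x : K} (hx : x ≠ 0) :
    v.valuation K x = ((Multiplicative.ofAdd
      (-(FractionalIdeal.count K v (spanSingleton R⁰ x))) : Multiplicative ℤ) :
        WithZero (Multiplicative ℤ)) := by
  obtain ⟨n, d, hnd⟩ := IsLocalization.exists_mk'_eq R⁰ x
  have hn : n ≠ 0 := by
    rintro rfl
    rw [← hnd, IsLocalization.mk'_zero] at hx
    exact hx rfl
  have hd0 : (algebraMap R K) (d : R) ≠ 0 :=
    map_ne_zero_of_mem_nonZeroDivisors _ (IsFractionRing.injective R K) d.property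
  have hI : spanSingleton R⁰ x =
      spanSingleton R⁰ ((algebraMap R K) (d : R))⁻¹ * ↑(Ideal.span {n} : Ideal R) := by
    rw [← hnd, coeIdeal_span_singleton, spanSingleton_mul_spanSingleton,
      IsFractionRing.mk'_eq_div, div_eq_mul_inv, mul_comm]
  have hx' : spanSingleton R⁰ x ≠ 0 := spanSingleton_ne_zero_iff.mpr hx
  rw [count_well_defined K v hx' hI]
  rw [← hnd, IsDedekindDomain.HeightOneSpectrum.valuation_of_mk',
    IsDedekindDomain.HeightOneSpectrum.intValuation_apply,
    IsDedekindDomain.HeightOneSpectrum.intValuation_apply,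
    IsDedekindDomain.HeightOneSpectrum.intValuationDef_if_neg v hn,
    IsDedekindDomain.HeightOneSpectrum.intValuationDef_if_neg v
      (nonZeroDivisors.coe_ne_zero d)]
  show ((Multiplicative.ofAdd _ : Multiplicative ℤ) : WithZero (Multiplicative ℤ)) /
      ((Multiplicative.ofAdd _ : Multiplicative ℤ) : WithZero (Multiplicative ℤ)) = _
  rw [← WithZero.coe_div, WithZero.coe_inj, div_eq_iff_eq_mul, ← ofAdd_add]
  congr 1
  ring


/-- If `T` is a finite set of finite places of a number field `K` whose
ideal classes generate the class group, then for any finitely supported integer-valued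
divisor `D` vanishing on `T`, there is `b ∈ Kˣ` with `v(b) = D(v)` for all finite `v ∉ T`
(the multiplicative valuation `v.valuation b` equals `ofAdd (-D v)`). -/
theorem exists_element_with_prescribed_divisor_outside_generating_set
    (K : Type*) [Field K] [NumberField K]
    (T : Finset (HeightOneSpectrum (𝓞 K)))
    (hgen : Subgroup.closure
      {c : ClassGroup (𝓞 K) | ∃ v ∈ T, ∃ hv : v.asIdeal ∈ (Ideal (𝓞 K))⁰,
        c = ClassGroup.mk0 ⟨v.asIdeal, hv⟩} = ⊤)
    (D : HeightOneSpectrum (𝓞 K) → ℤ)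
    (hfin : {v : HeightOneSpectrum (𝓞 K) | D v ≠ 0}.Finite)
    (hT : ∀ v ∈ T, D v = 0) :
    ∃ b : Kˣ, ∀ v : HeightOneSpectrum (𝓞 K), v ∉ T →
      v.valuation K (b : K)
        = ((Multiplicative.ofAdd (-D v) : Multiplicative ℤ) : WithZero (Multiplicative ℤ)) := by
  classical
  have hne : ∀ v : HeightOneSpectrum (𝓞 K), ((v.asIdeal : FractionalIdeal (𝓞 K)⁰ K)) ≠ 0 :=
    fun v => coeIdeal_ne_zero.mpr v.ne_bot
  set u : HeightOneSpectrum (𝓞 K) → (FractionalIdeal (𝓞 K)⁰ K)ˣ :=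
    fun v => Units.mk0 _ (hne v) with hu
  have hmk : ∀ (v : HeightOneSpectrum (𝓞 K)) (hv : v.asIdeal ∈ (Ideal (𝓞 K))⁰),
      ClassGroup.mk K (u v) = ClassGroup.mk0 ⟨v.asIdeal, hv⟩ := by
    intro v hv
    rw [← ClassGroup.mk_mk0 (K := K)]
    congr 1
  have hv0 : ∀ v : HeightOneSpectrum (𝓞 K), v.asIdeal ∈ (Ideal (𝓞 K))⁰ :=
    fun v => mem_nonZeroDivisors_iff_ne_zero.mpr v.ne_bot
  set U : (FractionalIdeal (𝓞 K)⁰ K)ˣ := ∏ᶠ v, u v ^ D v with hU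
  have hset : {c : ClassGroup (𝓞 K) | ∃ v ∈ T, ∃ hv : v.asIdeal ∈ (Ideal (𝓞 K))⁰,
      c = ClassGroup.mk0 ⟨v.asIdeal, hv⟩} = ClassGroup.mk K '' (u '' ↑T) := by
    ext c
    constructor
    · rintro ⟨v, hvT, hv, rfl⟩
      exact ⟨u v, ⟨v, hvT, rfl⟩, hmk v hv⟩
    · rintro ⟨_, ⟨v, hvT, rfl⟩, rfl⟩
      exact ⟨v, hvT, hv0 v, hmk v (hv0 v)⟩
  have hUmem : ClassGroup.mk K U⁻¹ ∈ Subgroup.map (ClassGroup.mk K)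
      (Subgroup.closure (u '' ↑T)) := by
    rw [MonoidHom.map_closure, ← hset, hgen]
    trivial
  obtain ⟨W, hWmem, hW⟩ := hUmem
  have h1 : ClassGroup.mk K (U * W) = 1 := by
    rw [_root_.map_mul, hW, _root_.map_inv, mul_inv_cancel]
  have hprin : ((U * W : (FractionalIdeal (𝓞 K)⁰ K)ˣ) : Submodule (𝓞 K) K).IsPrincipal :=
    ClassGroup.mk_eq_one_iff.mp h1
  obtain ⟨x, hxgen⟩ := hprin.principal
  have hVx : ((U * W : (FractionalIdeal (𝓞 K)⁰ K)ˣ) : FractionalIdeal (𝓞 K)⁰ K)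
      = spanSingleton (𝓞 K)⁰ x := by
    exact coeToSubmodule_injective (hxgen.trans (coe_spanSingleton _ _).symm)
  have hx0 : x ≠ 0 := by
    rintro rfl
    rw [spanSingleton_zero] at hVx
    exact Units.ne_zero _ hVx
  refine ⟨Units.mk0 x hx0, fun v hvT => ?_⟩
  -- count of U
  have hsupp : (Function.mulSupport fun w => u w ^ D w).Finite := by
    apply hfin.subset
    intro w hw
    simp only [Function.mem_mulSupport] at hw
    intro hD
    exact hw (by rw [hD, zpow_zero])
  have hUcoe : ((U : (FractionalIdeal (𝓞 K)⁰ K)ˣ) : FractionalIdeal (𝓞 K)⁰ K)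
      = ∏ᶠ w, (w.asIdeal : FractionalIdeal (𝓞 K)⁰ K) ^ (D w) := by
    rw [hU, ← Units.coeHom_apply, MonoidHom.map_finprod (Units.coeHom _) hsupp]
    exact finprod_congr fun w => by
      rw [Units.coeHom_apply, Units.val_zpow_eq_zpow_val]; rfl
  have hcountU : count K v (U : FractionalIdeal (𝓞 K)⁰ K) = D v := by
    rw [hUcoe, count_finprod K v D (Filter.eventually_cofinite.mpr hfin)]
  -- count of W is zero
  have hcountW : ∀ Y ∈ Subgroup.closure (u '' ↑T),
      count K v ((Y : (FractionalIdeal (𝓞 K)⁰ K)ˣ) : FractionalIdeal (𝓞 K)⁰ K) = 0 := by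
    intro Y hY
    induction hY using Subgroup.closure_induction with
    | mem y hy =>
      obtain ⟨w, hwT, rfl⟩ := hy
      have hwv : w ≠ v := fun h => hvT (h ▸ hwT)
      exact count_maximal_coprime K v hwv
    | one => exact count_one K v
    | mul y z hy hz hyc hzc =>
      rw [Units.val_mul, count_mul K v (Units.ne_zero y) (Units.ne_zero z), hyc, hzc, add_zero]
    | inv y hy hyc =>
      rw [← Units.coeHom_apply, _root_.map_inv, Units.coeHom_apply, count_inv, hyc, neg_zero]
  have hcount : count K v (spanSingleton (𝓞 K)⁰ x) = D v := by
    rw [← hVx, Units.val_mul, count_mul K v (Units.ne_zero U) (Units.ne_zero W),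
      hcountU, hcountW W hWmem, add_zero]
  rw [Units.val_mk0, valuation_eq_ofAdd_neg_count v hx0, hcount]
end
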